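/- For the Landau-Zener Hamiltonian, the derivative of the eigenprojections satisfies dP_s^±/ds = ±(g/(8 e_s²))(E_s + E_s*), where E_s is the matrix (1/(4e_s))[[g, -s-2e_s],[-s+2e_s, -g]]. -/

import Mathlib

open Matrix

/-- The half-gap `e_s = (1/2)√(s² + g²)`. -/
noncomputable def eLZ (g s : ℝ) : ℝ := (1/2) * Real.sqrt (s^2 + g^2)

/-- The Landau-Zener Hamiltonian `H_s = (1/2)[[s, g],[g, -s]]`. -/
noncomputable def HLZ (g s : ℝ) : Matrix (Fin 2) (Fin 2) ℂ :=
  (1/2 : ℂ) • !![(s : ℂ), (g : ℂ); (g : ℂ), -(s : ℂ)]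

/-- The eigenprojection `P_s⁺` of `H_s` for the eigenvalue `+e_s`. -/
noncomputable def PpLZ (g s : ℝ) : Matrix (Fin 2) (Fin 2) ℂ :=
  (1/2 : ℂ) • (1 + ((eLZ g s : ℝ) : ℂ)⁻¹ • HLZ g s)

/-- The eigenprojection `P_s⁻` of `H_s` for the eigenvalue `-e_s`. -/
noncomputable def PmLZ (g s : ℝ) : Matrix (Fin 2) (Fin 2) ℂ :=
  (1/2 : ℂ) • (1 - ((eLZ g s : ℝ) : ℂ)⁻¹ • HLZ g s)

/-- The (real) coherence `E_s = (1/(4e_s))[[g, -s-2e_s],[-s+2e_s, -g]]`. -/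
noncomputable def ELZ (g s : ℝ) : Matrix (Fin 2) (Fin 2) ℂ :=
  ((4 * eLZ g s : ℝ) : ℂ)⁻¹ •
    !![(g : ℂ), ((-s - 2 * eLZ g s : ℝ) : ℂ); ((-s + 2 * eLZ g s : ℝ) : ℂ), -(g : ℂ)]

attribute [local instance] Matrix.normedAddCommGroup Matrix.normedSpace

set_option maxHeartbeats 1000000

lemma eLZ_pos (g : ℝ) (hg : 0 < g) (t : ℝ) : 0 < eLZ g t := by
  unfold eLZ
  have : (0:ℝ) < t^2 + g^2 := by positivity
  positivity

lemma hasDerivAt_eLZ (g s : ℝ) (hg : 0 < g) :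
    HasDerivAt (fun t => eLZ g t) (s / (4 * eLZ g s)) s := by
  have hpos : (0:ℝ) < s^2 + g^2 := by positivity
  have hsq : HasDerivAt (fun t : ℝ => Real.sqrt (t^2 + g^2))
      (1 / (2 * Real.sqrt (s^2 + g^2)) * (2*s)) s := by
    have h1 : HasDerivAt (fun t : ℝ => t^2 + g^2) (2*s) s := by
      simpa using (hasDerivAt_pow 2 s).add_const (g^2)
    exact (Real.hasDerivAt_sqrt (ne_of_gt hpos)).comp s h1
  have := hsq.const_mul (1/2 : ℝ)
  have hs0 : Real.sqrt (s^2+g^2) ≠ 0 := by positivity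
  refine this.congr_deriv ?_
  unfold eLZ
  field_simp
  ring


/-- `dP_s^±/ds = ±(g/(8 e_s²))(E_s + E_s*)`. -/
theorem deriv_eigenprojections (g s : ℝ) (hg : 0 < g) :
    HasDerivAt (fun t : ℝ => PpLZ g t)
      (((g / (8 * (eLZ g s)^2) : ℝ) : ℂ) • (ELZ g s + (ELZ g s)ᴴ)) s ∧
    HasDerivAt (fun t : ℝ => PmLZ g t)
      (-(((g / (8 * (eLZ g s)^2) : ℝ) : ℂ) • (ELZ g s + (ELZ g s)ᴴ))) s := by
  set e := eLZ g s with he_def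
  have he : 0 < e := eLZ_pos g hg s
  have he4 : (4 * e : ℝ) ≠ 0 := by positivity
  have he2 : 4 * e^2 = s^2 + g^2 := by
    have : (0:ℝ) ≤ s^2 + g^2 := by positivity
    simp only [he_def, eLZ]
    rw [mul_pow, Real.sq_sqrt this]
    ring
  have hE := hasDerivAt_eLZ g s hg
  -- scalar derivatives
  have h4e : HasDerivAt (fun t => 4 * eLZ g t) (4 * (s / (4*e))) s := hE.const_mul 4
  have h1 : HasDerivAt (fun t => t / (4 * eLZ g t))
      ((1 * (4*e) - s * (4 * (s/(4*e)))) / (4*e)^2) s :=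
    (hasDerivAt_id s).div h4e he4
  have h2 : HasDerivAt (fun t => g / (4 * eLZ g t))
      ((0 * (4*e) - g * (4 * (s/(4*e)))) / (4*e)^2) s :=
    (hasDerivAt_const s g).div h4e he4
  set D : Matrix (Fin 2) (Fin 2) ℂ := !![1,0;0,-1] with hD
  set X : Matrix (Fin 2) (Fin 2) ℂ := !![0,1;1,0] with hX
  have hp : HasDerivAt (fun t : ℝ => PpLZ g t)
      ((((1 * (4*e) - s * (4 * (s/(4*e)))) / (4*e)^2 : ℝ) : ℂ) • D
        + (((0 * (4*e) - g * (4 * (s/(4*e)))) / (4*e)^2 : ℝ) : ℂ) • X) s := by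
    have hfun : (fun t : ℝ => PpLZ g t) =
        fun t : ℝ => ((1/2 : ℂ) • (1 : Matrix (Fin 2) (Fin 2) ℂ))
          + (((t / (4 * eLZ g t) : ℝ) : ℂ)) • D + (((g / (4 * eLZ g t) : ℝ) : ℂ)) • X := by
      funext t
      have het : ((eLZ g t : ℝ) : ℂ) ≠ 0 := by
        exact_mod_cast (eLZ_pos g hg t).ne'
      ext i j
      fin_cases i <;> fin_cases j <;>
        simp [PpLZ, HLZ, hD, hX, Matrix.smul_apply, Matrix.add_apply, Matrix.one_apply] <;>
        (try push_cast) <;> (try field_simp) <;> (first | ring1 | (left; ring1) | tauto)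
    rw [hfun]
    have := ((hasDerivAt_const s ((1/2 : ℂ) • (1 : Matrix (Fin 2) (Fin 2) ℂ))).add
      (h1.ofReal_comp.smul_const D)).add (h2.ofReal_comp.smul_const X)
    rw [zero_add] at this
    exact this
  have hkey : (((1 * (4*e) - s * (4 * (s/(4*e)))) / (4*e)^2 : ℝ) : ℂ) • D
        + (((0 * (4*e) - g * (4 * (s/(4*e)))) / (4*e)^2 : ℝ) : ℂ) • X
      = ((g / (8 * e^2) : ℝ) : ℂ) • (ELZ g s + (ELZ g s)ᴴ) := by
    have hec : (e:ℂ) ≠ 0 := by exact_mod_cast he.ne'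
    have he2c : 4 * (e:ℂ)^2 = (s:ℂ)^2 + (g:ℂ)^2 := by exact_mod_cast he2
    ext i j
    fin_cases i <;> fin_cases j <;>
      simp [ELZ, hD, hX, Matrix.smul_apply, Matrix.add_apply, Matrix.conjTranspose_apply,
        Complex.conj_ofReal, ← he_def] <;>
      (try push_cast) <;> (try field_simp) <;>
      (first
        | ring1
        | linear_combination (128*(e:ℂ)^3) * he2c
        | linear_combination (-128*(e:ℂ)^3) * he2c
        | linear_combination (512*(e:ℂ)^4) * he2c
        | linear_combination (-512*(e:ℂ)^4) * he2c
        | linear_combination (8:ℂ) * he2c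
        | linear_combination (-8:ℂ) * he2c)
  rw [hkey] at hp
  refine ⟨hp, ?_⟩
  have hm : (fun t : ℝ => PmLZ g t) = fun t : ℝ => (1 : Matrix (Fin 2) (Fin 2) ℂ) - PpLZ g t := by
    funext t
    simp only [PmLZ, PpLZ, smul_add, smul_sub]
    ext i j
    fin_cases i <;> fin_cases j <;>
      simp [Matrix.sub_apply, Matrix.add_apply, Matrix.smul_apply, Matrix.one_apply] <;> ring
  rw [hm]
  have := (hasDerivAt_const s (1 : Matrix (Fin 2) (Fin 2) ℂ)).sub hp
  rw [zero_sub] at this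
  exact this
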